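/- Let q = p^e with p prime, 0 ≤ k < e, and let l be the least even positive integer such that (e−k)·l is a multiple of lcm(e, e−k). Let λ ∈ F_q^* with r = ord(λ) dividing 1 + p^{e−k}, let n be a positive integer, and let C = ⟨g(x)⟩ be the λ-constacyclic code of length n over F_q generated by a monic divisor g(x) of x^n − λ in F_q[x]. Then C contains its k-Galois dual, i.e. C^{⊥k} ⊆ C, if and only if x^n − λ ≡ 0 (mod g(x)·g^{(l−1)#}(x)). -/

import Mathlib

open Polynomial

/-- The `k`-Galois dual (as a set) of a set of codewords `C ⊆ R^ι`,
with respect to the inner product `⟨u,v⟩ = ∑ i, u i * (v i)^pk`. -/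
def galoisDualSet {R : Type*} [CommRing R] {ι : Type*} [Fintype ι]
    (pk : ℕ) (C : Set (ι → R)) : Set (ι → R) :=
  {v | ∀ c ∈ C, ∑ i, c i * v i ^ pk = 0}

/-- For `f(x) = Σ_{i=0}^m f_i x^i` of degree `m`, the polynomial
`f^#(x) = Σ_{i=0}^m f_0^{-p^(e-k)} f_i^{p^(e-k)} x^(m-i)`. -/
noncomputable def sharp (p e k : ℕ) {F : Type*} [Field F] (f : Polynomial F) :
    Polynomial F :=
  ∑ i ∈ Finset.range (f.natDegree + 1),
    Polynomial.C ((f.coeff 0)⁻¹ ^ p ^ (e - k) * f.coeff i ^ p ^ (e - k)) *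
      Polynomial.X ^ (f.natDegree - i)

namespace Stmt2Aux
variable {F : Type*} [Field F]

/-! ### The polynomial attached to a codeword -/

noncomputable def Pv {n : ℕ} (v : Fin n → F) : F[X] := ∑ i : Fin n, C (v i) * X ^ (i : ℕ)

lemma coeff_Pv {n : ℕ} (v : Fin n → F) (j : ℕ) :
    (Pv v).coeff j = if h : j < n then v ⟨j, h⟩ else 0 := by
  classical
  rw [Pv, finset_sum_coeff]
  simp only [coeff_C_mul, coeff_X_pow, mul_ite, mul_one, mul_zero]
  split
  · next h =>
    rw [Finset.sum_eq_single (⟨j, h⟩ : Fin n)]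
    · simp
    · intro b _ hb
      simp only [ite_eq_right_iff]
      intro hj
      exact absurd (Fin.ext hj.symm) hb
    · simp
  · next h =>
    apply Finset.sum_eq_zero
    intro i _
    simp only [ite_eq_right_iff]
    intro hj
    exact absurd (hj ▸ i.isLt) h

lemma degree_Pv {n : ℕ} (v : Fin n → F) : (Pv v).degree < (n : WithBot ℕ) := by
  rw [degree_lt_iff_coeff_zero]
  intro m hm
  rw [coeff_Pv]
  have : ¬ m < n := by exact_mod_cast not_lt.mpr hm
  simp [this]

lemma natDegree_Pv {n : ℕ} (hn : 0 < n) (v : Fin n → F) : (Pv v).natDegree < n := by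
  rcases eq_or_ne (Pv v) 0 with h | h
  · simpa [h]
  · exact (natDegree_lt_iff_degree_lt h).2 (by exact_mod_cast degree_Pv v)

lemma Pv_coeff {n : ℕ} (f : F[X]) (hf : f.degree < (n : WithBot ℕ)) :
    Pv (fun i : Fin n => f.coeff (i : ℕ)) = f := by
  ext j
  rw [coeff_Pv]
  split
  · rfl
  · next h =>
    exact (coeff_eq_zero_of_degree_lt (lt_of_lt_of_le hf (by exact_mod_cast not_lt.1 h))).symm

lemma Pv_add {n : ℕ} (a b : Fin n → F) : Pv (a + b) = Pv a + Pv b := by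
  simp [Pv, C_add, add_mul, Finset.sum_add_distrib]

lemma Pv_smul {n : ℕ} (c : F) (a : Fin n → F) : Pv (c • a) = C c * Pv a := by
  simp [Pv, C_mul, mul_assoc, Finset.mul_sum]

/-! ### The code as a submodule, and cardinalities -/

def codeSubmodule (n : ℕ) (q₀ : F[X]) : Submodule F (Fin n → F) where
  carrier := {v | q₀ ∣ Pv v}
  add_mem' := by
    intro a b ha hb
    show q₀ ∣ Pv (a + b)
    rw [Pv_add]; exact dvd_add ha hb
  zero_mem' := by
    show q₀ ∣ Pv (0 : Fin n → F)
    simp [Pv]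
  smul_mem' := by
    intro c a ha
    show q₀ ∣ Pv (c • a)
    rw [Pv_smul]; exact Dvd.dvd.mul_left ha _

noncomputable def codeEquiv {n : ℕ} (hn : 0 < n) (q₀ : F[X]) (hq : q₀.Monic)
    (hm : q₀.natDegree ≤ n) :
    {v : Fin n → F // q₀ ∣ Pv v} ≃ (degreeLT F (n - q₀.natDegree)) where
  toFun v := ⟨Pv v.1 /ₘ q₀, by
    rw [mem_degreeLT]
    have ht : q₀ * (Pv v.1 /ₘ q₀) = Pv v.1 := by
      have h0 := modByMonic_add_div (Pv v.1) q₀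
      rwa [(modByMonic_eq_zero_iff_dvd hq).2 v.2, zero_add] at h0
    rcases eq_or_ne (Pv v.1 /ₘ q₀) 0 with h | h
    · rw [h, degree_zero]; exact WithBot.bot_lt_coe _
    · rw [← natDegree_lt_iff_degree_lt h]
      have h1 : (Pv v.1).natDegree < n := natDegree_Pv hn v.1
      have h2 := natDegree_mul hq.ne_zero h
      rw [ht] at h2
      omega⟩
  invFun t := ⟨fun i => (q₀ * t.1).coeff i, by
    have hdeg : (q₀ * t.1).degree < (n : WithBot ℕ) := by
      rcases eq_or_ne t.1 0 with h | h
      · rw [h, mul_zero, degree_zero]; exact WithBot.bot_lt_coe _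
      · rw [← natDegree_lt_iff_degree_lt (mul_ne_zero hq.ne_zero h)]
        have h2 := natDegree_mul hq.ne_zero h
        have h3 : t.1.natDegree < n - q₀.natDegree := by
          have := mem_degreeLT.1 t.2
          rwa [← natDegree_lt_iff_degree_lt h] at this
        omega
    rw [Pv_coeff _ hdeg]
    exact Dvd.intro _ rfl⟩
  left_inv v := by
    apply Subtype.ext
    funext i
    have ht : q₀ * (Pv v.1 /ₘ q₀) = Pv v.1 := by
      have h0 := modByMonic_add_div (Pv v.1) q₀
      rwa [(modByMonic_eq_zero_iff_dvd hq).2 v.2, zero_add] at h0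
    show (q₀ * (Pv v.1 /ₘ q₀)).coeff i = v.1 i
    rw [ht, coeff_Pv]
    simp [i.isLt]
  right_inv t := by
    ext1
    have hdeg : (q₀ * t.1).degree < (n : WithBot ℕ) := by
      rcases eq_or_ne t.1 0 with h | h
      · rw [h, mul_zero, degree_zero]; exact WithBot.bot_lt_coe _
      · rw [← natDegree_lt_iff_degree_lt (mul_ne_zero hq.ne_zero h)]
        have h2 := natDegree_mul hq.ne_zero h
        have h3 : t.1.natDegree < n - q₀.natDegree := by
          have := mem_degreeLT.1 t.2
          rwa [← natDegree_lt_iff_degree_lt h] at this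
        omega
    show Pv (fun i : Fin n => (q₀ * t.1).coeff i) /ₘ q₀ = t.1
    rw [Pv_coeff _ hdeg]
    apply mul_left_cancel₀ hq.ne_zero
    have h0 := modByMonic_add_div (q₀ * t.1) q₀
    rwa [(modByMonic_eq_zero_iff_dvd hq).2 (Dvd.intro _ rfl), zero_add] at h0

lemma card_code [Fintype F] {n : ℕ} (hn : 0 < n) (q₀ : F[X]) (hq : q₀.Monic)
    (hm : q₀.natDegree ≤ n) :
    Nat.card {v : Fin n → F // q₀ ∣ Pv v} = Fintype.card F ^ (n - q₀.natDegree) := by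
  rw [Nat.card_congr (codeEquiv hn q₀ hq hm),
    Nat.card_congr (Polynomial.degreeLTEquiv F (n - q₀.natDegree)).toEquiv]
  simp [Nat.card_eq_fintype_card]

/-! ### Dot product bilinear form on `Fin n → F` -/

noncomputable def dotForm (n : ℕ) : LinearMap.BilinForm F (Fin n → F) :=
  LinearMap.mk₂ F (fun u v => ∑ i, u i * v i)
    (by intro a b c; simp [add_mul, Finset.sum_add_distrib])
    (by intro a b c; simp [Finset.mul_sum, mul_assoc])
    (by intro a b c; simp [mul_add, Finset.sum_add_distrib])
    (by intro a b c; simp [Finset.mul_sum]; congr 1; funext i; ring)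

lemma dotForm_apply {n : ℕ} (u v : Fin n → F) : dotForm n u v = ∑ i, u i * v i := rfl

lemma dotForm_nondeg (n : ℕ) : (dotForm (F := F) n).Nondegenerate := by
  refine ⟨fun u hu => ?_, fun u hu => ?_⟩ <;> funext j
  · have := hu (Pi.single j 1)
    rw [dotForm_apply] at this
    simpa [Pi.single_apply] using this
  · have := hu (Pi.single j 1)
    rw [dotForm_apply] at this
    simpa [Pi.single_apply] using this

lemma dotForm_refl (n : ℕ) : (dotForm (F := F) n).IsRefl := by
  intro u v h
  rw [dotForm_apply] at h ⊢
  rw [← h]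
  exact Finset.sum_congr rfl fun i _ => mul_comm _ _

lemma dual_card [Fintype F] {n : ℕ} (pk : ℕ)
    (hpk : Function.Bijective (fun x : F => x ^ pk)) (M : Submodule F (Fin n → F)) :
    Nat.card (galoisDualSet pk (M : Set (Fin n → F))) =
      Fintype.card F ^ (n - Module.finrank F M) := by
  classical
  set B := dotForm (F := F) n
  let e : (Fin n → F) ≃ (Fin n → F) :=
    Equiv.piCongrRight (fun _ => Equiv.ofBijective _ hpk)
  have key : ∀ v : Fin n → F, v ∈ galoisDualSet pk (M : Set (Fin n → F)) ↔
      e v ∈ B.orthogonal M := by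
    intro v
    rw [LinearMap.BilinForm.mem_orthogonal_iff]
    rfl
  have ecard : Nat.card (galoisDualSet pk (M : Set (Fin n → F))) =
      Nat.card (B.orthogonal M) := Nat.card_congr (e.subtypeEquiv key)
  rw [ecard]
  letI : Fintype (B.orthogonal M) := Fintype.ofFinite _
  rw [Nat.card_eq_fintype_card, Module.card_eq_pow_finrank (K := F)]
  congr 1
  rw [LinearMap.BilinForm.finrank_orthogonal (dotForm_nondeg n)]
  congr 1
  simp

/-! ### reverse / reflect helpers -/

lemma reverse_reverse {f : F[X]} (h0 : f.coeff 0 ≠ 0) : f.reverse.reverse = f := by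
  have hnt : f.natTrailingDegree = 0 := natTrailingDegree_eq_zero.2 (Or.inr h0)
  have hnd : f.reverse.natDegree = f.natDegree := by
    rw [reverse_natDegree, hnt, Nat.sub_zero]
  conv_lhs => rw [Polynomial.reverse, hnd]
  ext j
  rw [coeff_reflect, coeff_reverse, revAt_invol]

lemma reverse_dvd_of_dvd {a b : F[X]} (h : a ∣ b) : a.reverse ∣ b.reverse := by
  obtain ⟨c, rfl⟩ := h
  rw [reverse_mul_of_domain]
  exact Dvd.intro _ rfl

lemma reverse_dvd_iff {a b : F[X]} (ha : a.coeff 0 ≠ 0) (hb : b.coeff 0 ≠ 0) :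
    a.reverse ∣ b.reverse ↔ a ∣ b := by
  constructor
  · intro h
    have := reverse_dvd_of_dvd h
    rwa [reverse_reverse ha, reverse_reverse hb] at this
  · exact reverse_dvd_of_dvd

lemma natDegree_reverse_of {f : F[X]} (h0 : f.coeff 0 ≠ 0) :
    f.reverse.natDegree = f.natDegree := by
  rw [reverse_natDegree, natTrailingDegree_eq_zero.2 (Or.inr h0), Nat.sub_zero]

lemma reverse_map (τ : F →+* F) (f : F[X]) : (f.map τ).reverse = f.reverse.map τ := by
  rw [Polynomial.reverse, Polynomial.reverse, natDegree_map, reflect_map]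

lemma reverse_C' (c : F) : (C c).reverse = C c := by
  rw [Polynomial.reverse, natDegree_C, reflect_C, pow_zero, mul_one]

lemma reflect_reflect (N : ℕ) (f : F[X]) : reflect N (reflect N f) = f := by
  ext j
  rw [coeff_reflect, coeff_reflect, revAt_invol]

lemma natDegree_reflect_le {N : ℕ} {f : F[X]} (h : f.natDegree ≤ N) :
    (reflect N f).natDegree ≤ N := by
  rw [natDegree_le_iff_coeff_eq_zero]
  intro m hm
  rw [coeff_reflect, revAt_eq_self_of_lt (by omega)]
  exact coeff_eq_zero_of_natDegree_lt (by omega)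

lemma sum_coeff_mul_eq {n : ℕ} (hn : 0 < n) (A W : F[X]) :
    ∑ i : Fin n, A.coeff (i : ℕ) * W.coeff (i : ℕ) =
      (A * reflect (n - 1) W).coeff (n - 1) := by
  rw [coeff_mul, Finset.Nat.sum_antidiagonal_eq_sum_range_succ_mk]
  have hr : n - 1 + 1 = n := by omega
  rw [Nat.succ_eq_add_one, hr, Fin.sum_univ_eq_sum_range (fun i => A.coeff i * W.coeff i) n]
  apply Finset.sum_congr rfl
  intro i hi
  rw [Finset.mem_range] at hi
  congr 1
  rw [coeff_reflect, revAt_le (by omega : n - 1 - i ≤ n - 1)]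
  congr 1
  omega

lemma pow_emul (p e : ℕ) (hfe : ∀ x : F, x ^ p ^ e = x) (t : ℕ) (x : F) :
    x ^ p ^ (e * t) = x := by
  induction t with
  | zero => simp
  | succ t ih =>
    rw [Nat.mul_succ, pow_add, pow_mul, ih, hfe]

/-! ### Frobenius helpers -/

lemma iter_ne_zero (p : ℕ) [ExpChar F p] (m : ℕ) {x : F} (hx : x ≠ 0) :
    iterateFrobenius F p m x ≠ 0 := by
  rw [iterateFrobenius_def]
  exact pow_ne_zero _ hx

lemma map_iter_id (p : ℕ) [ExpChar F p] {m : ℕ} (hid : ∀ x : F, x ^ p ^ m = x) (f : F[X]) :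
    f.map (iterateFrobenius F p m) = f := by
  ext j
  rw [coeff_map, iterateFrobenius_def, hid]

lemma map_iter_dvd_iff (p : ℕ) [ExpChar F p] {a b : ℕ} (hid : ∀ x : F, x ^ p ^ (a + b) = x)
    (f u : F[X]) :
    f.map (iterateFrobenius F p a) ∣ u.map (iterateFrobenius F p a) ↔ f ∣ u := by
  constructor
  · intro h
    have h2 := Polynomial.map_dvd (iterateFrobenius F p b) h
    rw [Polynomial.map_map, Polynomial.map_map, ← iterateFrobenius_add, add_comm b a] at h2
    rwa [map_iter_id p hid, map_iter_id p hid] at h2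
  · exact fun h => Polynomial.map_dvd _ h

/-! ### the `#` operation via `reverse` and Frobenius -/

noncomputable def Sf (p e k : ℕ) [ExpChar F p] (f : F[X]) : F[X] :=
  C ((iterateFrobenius F p (e - k) (f.coeff 0))⁻¹) *
    (f.map (iterateFrobenius F p (e - k))).reverse

lemma sharp_eq_Sf (p e k : ℕ) [ExpChar F p] (hp0 : p ≠ 0) (f : F[X]) :
    sharp p e k f = Sf p e k f := by
  set m := f.natDegree with hm
  ext j
  rw [sharp, finset_sum_coeff]
  simp only [coeff_C_mul, coeff_X_pow]
  rw [Sf, coeff_C_mul, coeff_reverse, natDegree_map, iterateFrobenius_def, coeff_map,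
    iterateFrobenius_def]
  by_cases hj : j ≤ m
  · rw [Finset.sum_eq_single (m - j)]
    · rw [if_pos (show j = m - (m - j) by omega), mul_one, revAt_le hj, inv_pow]
    · intro b hb hbne
      rw [Finset.mem_range] at hb
      rw [if_neg, mul_zero]
      omega
    · intro hmem
      exact absurd (Finset.mem_range.2 (by omega)) hmem
  · rw [Finset.sum_eq_zero, revAt_eq_self_of_lt (show m < j by omega)]
    · rw [coeff_eq_zero_of_natDegree_lt (show m < j by omega), zero_pow, mul_zero]
      exact pow_ne_zero _ hp0
    · intro i hi
      rw [Finset.mem_range] at hi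
      rw [if_neg, mul_zero]
      omega

lemma Sf_coeff_zero (p e k : ℕ) [ExpChar F p] {f : F[X]} (hf : f.Monic) :
    (Sf p e k f).coeff 0 = (iterateFrobenius F p (e - k) (f.coeff 0))⁻¹ := by
  rw [Sf, coeff_C_mul, coeff_zero_reverse, Monic.leadingCoeff (hf.map _), mul_one]

lemma Sf_Sf (p e k : ℕ) [ExpChar F p] {f : F[X]} (hf : f.Monic) (h0 : f.coeff 0 ≠ 0) :
    Sf p e k (Sf p e k f) = f.map (iterateFrobenius F p ((e - k) + (e - k))) := by
  set τ := iterateFrobenius F p (e - k) with hτ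
  set a := f.coeff 0 with ha
  have hττ : (τ (τ a)) ≠ 0 := iter_ne_zero p _ (iter_ne_zero p _ h0)
  have hA : Sf p e k f = C ((τ a)⁻¹) * (f.map τ).reverse := rfl
  have hmap2 : (f.map τ).map τ = f.map (iterateFrobenius F p ((e - k) + (e - k))) := by
    rw [Polynomial.map_map, ← iterateFrobenius_add]
  have hrev : (((f.map τ).map τ).reverse).reverse = (f.map τ).map τ := by
    apply reverse_reverse
    rw [coeff_map, coeff_map]
    exact hττ
  calc Sf p e k (Sf p e k f)
      = C ((τ ((Sf p e k f).coeff 0))⁻¹) * ((Sf p e k f).map τ).reverse := rfl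
    _ = C (τ (τ a)) * ((Sf p e k f).map τ).reverse := by
        rw [Sf_coeff_zero p e k hf, map_inv₀ τ, inv_inv]
    _ = C (τ (τ a)) * (C ((τ (τ a))⁻¹) * (((f.map τ).map τ).reverse).reverse) := by
        rw [hA, Polynomial.map_mul, Polynomial.map_C, map_inv₀ τ, ← reverse_map,
          reverse_mul_of_domain, reverse_C']
    _ = f.map (iterateFrobenius F p ((e - k) + (e - k))) := by
        rw [hrev, ← mul_assoc, ← C_mul, mul_inv_cancel₀ hττ, C_1, one_mul, hmap2]

lemma Sf_iter_even (p e k : ℕ) [ExpChar F p] {g : F[X]} (hg : g.Monic) (h0 : g.coeff 0 ≠ 0)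
    (t : ℕ) :
    (Sf p e k)^[2 * t] g = g.map (iterateFrobenius F p ((e - k) * (2 * t))) := by
  induction t with
  | zero =>
    simp only [Nat.mul_zero, Function.iterate_zero, id_eq]
    rw [show iterateFrobenius F p 0 = RingHom.id F from by
      ext x; rw [iterateFrobenius_def, pow_zero, pow_one, RingHom.id_apply], map_id]
  | succ t ih =>
    have hstep : 2 * (t + 1) = 2 + 2 * t := by ring
    rw [hstep, Function.iterate_add_apply, ih]
    have hmon : (g.map (iterateFrobenius F p ((e - k) * (2 * t)))).Monic := hg.map _
    have hc0 : (g.map (iterateFrobenius F p ((e - k) * (2 * t)))).coeff 0 ≠ 0 := by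
      rw [coeff_map]; exact iter_ne_zero p _ h0
    show Sf p e k (Sf p e k _) = _
    rw [Sf_Sf p e k hmon hc0, Polynomial.map_map, ← iterateFrobenius_add]
    congr 2
    ring

end Stmt2Aux

open Stmt2Aux

theorem stmt2 {p e k n l : ℕ} (hp : p.Prime) (he : 0 < e) (hk : k < e) (hn : 0 < n)
    {F : Type*} [Field F] [Fintype F] (hcard : Fintype.card F = p ^ e)
    (lam : F) (hlam : lam ≠ 0) (hr : orderOf lam ∣ 1 + p ^ (e - k))
    (hl : IsLeast {m : ℕ | 0 < m ∧ Even m ∧ Nat.lcm e (e - k) ∣ (e - k) * m} l)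
    (g : Polynomial F) (hg : g.Monic) (hgd : g ∣ X ^ n - Polynomial.C lam) :
    galoisDualSet (p ^ k)
          {c : Fin n → F | g ∣ ∑ i : Fin n, Polynomial.C (c i) * X ^ (i : ℕ)} ⊆
        {c : Fin n → F | g ∣ ∑ i : Fin n, Polynomial.C (c i) * X ^ (i : ℕ)} ↔
      g * (sharp p e k)^[l - 1] g ∣ X ^ n - Polynomial.C lam := by
  classical
  -- characteristic p
  haveI hcharP : CharP F p := by
    obtain ⟨p', hcp⟩ := CharP.exists F
    haveI := hcp
    obtain ⟨m, hm_prime, hcard'⟩ := FiniteField.card F p'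
    have hpp' : p = p' := by
      have h1 : p ∣ p' ^ (m : ℕ) := by
        rw [← hcard', hcard]
        exact dvd_pow_self p he.ne'
      exact (Nat.prime_dvd_prime_iff_eq hp hm_prime).1 (hp.dvd_of_dvd_pow h1)
    rwa [hpp']
  haveI : ExpChar F p := ExpChar.prime hp
  have hfe : ∀ x : F, x ^ p ^ e = x := fun x => by rw [← hcard]; exact FiniteField.pow_card x
  -- the structure of l
  obtain ⟨⟨hl0, hleven, hldvd⟩, -⟩ := hl
  have hel : e ∣ (e - k) * l := (Nat.dvd_lcm_left e (e - k)).trans hldvd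
  obtain ⟨c, hc⟩ := hleven
  obtain ⟨t', rfl⟩ : ∃ t', c = t' + 1 := ⟨c - 1, by omega⟩
  have hlval : l = 2 * t' + 2 := by omega
  subst hc
  -- g and h
  obtain ⟨h, hgh⟩ := hgd
  have hXn : (X ^ n - C lam : F[X]).Monic := monic_X_pow_sub_C lam hn.ne'
  have hmh : h.Monic := hg.of_mul_monic_left (hgh ▸ hXn)
  have hco : (X ^ n - C lam : F[X]).coeff 0 = -lam := by
    rw [coeff_sub, coeff_X_pow, if_neg (show ¬ (0:ℕ) = n by omega), coeff_C_zero, zero_sub]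
  have hgh0 : g.coeff 0 * h.coeff 0 = -lam := by rw [← mul_coeff_zero, ← hgh, hco]
  have hg0 : g.coeff 0 ≠ 0 := by
    intro hz; rw [hz, zero_mul] at hgh0; exact hlam (neg_eq_zero.1 hgh0.symm)
  have hh0 : h.coeff 0 ≠ 0 := by
    intro hz; rw [hz, mul_zero] at hgh0; exact hlam (neg_eq_zero.1 hgh0.symm)
  have hdeg : g.natDegree + h.natDegree = n := by
    have := natDegree_mul hg.ne_zero hmh.ne_zero
    rw [← hgh, natDegree_X_pow_sub_C] at this
    omega
  set d := g.natDegree with hd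
  have hdn : d ≤ n := by omega
  set τ1 := iterateFrobenius F p (e - k) with hτ1
  -- Hm : monic generator of the candidate dual code
  have hτh0 : τ1 (h.coeff 0) ≠ 0 := iter_ne_zero p _ hh0
  set Hm : F[X] := C ((τ1 (h.coeff 0))⁻¹) * (h.reverse.map τ1) with hHm
  have hrevh_ne : h.reverse ≠ 0 := fun hz => hmh.ne_zero (reverse_eq_zero.1 hz)
  have hmapne : h.reverse.map τ1 ≠ 0 := map_ne_zero hrevh_ne
  have hrevh_lead : h.reverse.leadingCoeff = h.coeff 0 := by
    rw [reverse_leadingCoeff, trailingCoeff,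
      natTrailingDegree_eq_zero.2 (Or.inr hh0)]
  have hHmon : Hm.Monic := by
    show Hm.leadingCoeff = 1
    rw [hHm, leadingCoeff_mul, leadingCoeff_C, leadingCoeff_map, hrevh_lead]
    exact inv_mul_cancel₀ hτh0
  have hHd : Hm.natDegree = n - d := by
    rw [hHm, natDegree_mul (by simp [hτh0] : (C ((τ1 (h.coeff 0))⁻¹) : F[X]) ≠ 0) hmapne,
      natDegree_C, natDegree_map, natDegree_reverse_of hh0]
    omega
  -- the two codes as sets
  set Cs : Set (Fin n → F) := {v : Fin n → F | g ∣ Pv v} with hCs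
  set Ds : Set (Fin n → F) := {v : Fin n → F | Hm ∣ Pv v} with hDs
  -- Step A1 : Ds ⊆ dual
  have hDsub : Ds ⊆ galoisDualSet (p ^ k) Cs := by
    intro v hv c hc
    have hvD : Hm ∣ Pv v := hv
    have hcC : g ∣ Pv c := hc
    set W : F[X] := (Pv v).map (iterateFrobenius F p k) with hW
    have hWcoeff : ∀ i : Fin n, W.coeff (i : ℕ) = v i ^ p ^ k := by
      intro i
      rw [hW, coeff_map, iterateFrobenius_def, coeff_Pv]
      simp [i.isLt]
    have hsum : ∑ i : Fin n, c i * v i ^ p ^ k =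
        ∑ i : Fin n, (Pv c).coeff (i : ℕ) * W.coeff (i : ℕ) := by
      apply Finset.sum_congr rfl
      intro i _
      rw [hWcoeff i, coeff_Pv]
      simp [i.isLt]
    rw [hsum, sum_coeff_mul_eq hn]
    -- trivial cases
    rcases eq_or_ne (Pv c) 0 with hc0 | hc0
    · rw [hc0, zero_mul, coeff_zero]
    rcases eq_or_ne (Pv v) 0 with hv0 | hv0
    · rw [hW, hv0, Polynomial.map_zero, reflect_zero, mul_zero, coeff_zero]
    -- main case
    have hWne : W ≠ 0 := map_ne_zero hv0
    -- h.reverse divides W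
    have hrevdvd : h.reverse ∣ W := by
      have h1 : h.reverse.map τ1 ∣ Pv v := by
        have := hvD
        rw [hHm] at this
        exact ((isUnit_C.2 (inv_ne_zero hτh0).isUnit).mul_left_dvd).1 this
      have h2 := Polynomial.map_dvd (iterateFrobenius F p k) h1
      rw [Polynomial.map_map, hτ1, ← iterateFrobenius_add] at h2
      rw [show k + (e - k) = e by omega] at h2
      rwa [map_iter_id p hfe] at h2
    obtain ⟨s, hs⟩ := hcC
    obtain ⟨w, hw⟩ := hrevdvd
    have hs0 : s ≠ 0 := fun hz => hc0 (by rw [hs, hz, mul_zero])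
    have hw0 : w ≠ 0 := fun hz => hWne (by rw [hw, hz, mul_zero])
    have hnds : d + s.natDegree < n := by
      have := natDegree_mul hg.ne_zero hs0
      rw [← hs] at this
      have h2 := natDegree_Pv hn c
      omega
    have hndw : (n - d) + w.natDegree < n := by
      have := natDegree_mul hrevh_ne hw0
      rw [← hw] at this
      have h2 : W.natDegree < n := by
        rw [hW, natDegree_map]
        exact natDegree_Pv hn v
      rw [natDegree_reverse_of hh0] at this
      omega
    have hd1 : 1 ≤ d := by omega
    -- reflect the factorization
    have hreflW : reflect (n - 1) W = h * reflect (d - 1) w := by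
      have hsplit : (n - 1) = (n - d) + (d - 1) := by omega
      rw [hw, hsplit, reflect_mul h.reverse w
        (by rw [natDegree_reverse_of hh0]; omega) (by omega)]
      congr 1
      show reflect (n - d) h.reverse = h
      rw [Polynomial.reverse, show h.natDegree = n - d by omega, Stmt2Aux.reflect_reflect]
    rw [hs, hreflW]
    have : g * s * (h * reflect (d - 1) w) = (X ^ n - C lam) * (s * reflect (d - 1) w) := by
      rw [hgh]; ring
    rw [this]
    have hu : (s * reflect (d - 1) w).natDegree < n - 1 := by
      have h1 : (reflect (d - 1) w).natDegree ≤ d - 1 := natDegree_reflect_le (by omega)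
      have h2 := natDegree_mul_le (p := s) (q := reflect (d - 1) w)
      omega
    rw [sub_mul, coeff_sub, coeff_X_pow_mul', if_neg (show ¬ n ≤ n - 1 by omega),
      coeff_C_mul, coeff_eq_zero_of_natDegree_lt hu, mul_zero, sub_zero]
  -- bijectivity of x ↦ x ^ p ^ k
  have hbij : Function.Bijective (fun x : F => x ^ p ^ k) := by
    have hfn : (fun x : F => x ^ p ^ k) = ⇑(iterateFrobenius F p k) := by
      funext x; rw [iterateFrobenius_def]
    rw [hfn]
    exact Finite.injective_iff_bijective.1 (iterateFrobenius F p k).injective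
  -- dimension of the code
  have hfinrank : Module.finrank F (codeSubmodule n g) = n - d := by
    letI : Fintype (codeSubmodule n g) := Fintype.ofFinite _
    have h1 : Nat.card (codeSubmodule n g) = Fintype.card F ^ (n - d) := by
      rw [← card_code (F := F) hn g hg hdn]
      exact Nat.card_congr (Equiv.subtypeEquivRight (fun v => Iff.rfl))
    rw [Nat.card_eq_fintype_card, Module.card_eq_pow_finrank (K := F)] at h1
    exact Nat.pow_right_injective Fintype.one_lt_card h1
  have hCsM : Cs = ↑(codeSubmodule n g) := rfl
  have hdualcard : Nat.card (galoisDualSet (p ^ k) Cs) = Fintype.card F ^ d := by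
    rw [hCsM, dual_card (p ^ k) hbij (codeSubmodule n g), hfinrank,
      show n - (n - d) = d by omega]
  have hDcard : Nat.card Ds = Fintype.card F ^ d := by
    have h1 : Nat.card Ds = Nat.card {v : Fin n → F // Hm ∣ Pv v} :=
      Nat.card_congr (Equiv.subtypeEquivRight (fun v => Iff.rfl))
    rw [h1, card_code (F := F) hn Hm hHmon (by omega : Hm.natDegree ≤ n), hHd,
      show n - (n - d) = d by omega]
  have hdualeq : galoisDualSet (p ^ k) Cs = Ds := by
    refine (Set.eq_of_subset_of_ncard_le hDsub ?_ (Set.toFinite _)).symm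
    rw [← Nat.card_coe_set_eq, ← Nat.card_coe_set_eq, hdualcard, hDcard]
  -- Step B : Ds ⊆ Cs ↔ g ∣ Hm
  have hB : Ds ⊆ Cs ↔ g ∣ Hm := by
    constructor
    · intro hsub
      rcases Nat.eq_zero_or_pos d with hd0 | hd1
      · rw [hg.natDegree_eq_zero.1 hd0]
        exact one_dvd _
      · have hHdeg : Hm.degree < (n : WithBot ℕ) := by
          rw [← natDegree_lt_iff_degree_lt hHmon.ne_zero]
          omega
        have hv : (fun i : Fin n => Hm.coeff (i : ℕ)) ∈ Ds := by
          show Hm ∣ Pv _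
          rw [Pv_coeff _ hHdeg]
        have hmem := hsub hv
        have : g ∣ Pv (fun i : Fin n => Hm.coeff (i : ℕ)) := hmem
        rwa [Pv_coeff _ hHdeg] at this
    · intro hdvd v hv
      exact dvd_trans hdvd hv
  -- Step C : g ∣ Hm ↔ g.reverse ∣ h.map τ1
  have hmapc0 : (h.reverse.map τ1).coeff 0 ≠ 0 := by
    rw [coeff_map, coeff_zero_reverse, hmh.leadingCoeff, map_one]
    exact one_ne_zero
  have hC1 : g ∣ Hm ↔ g.reverse ∣ h.map τ1 := by
    constructor
    · intro hd
      have h1 : g ∣ h.reverse.map τ1 := by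
        rw [hHm] at hd
        exact ((isUnit_C.2 (inv_ne_zero hτh0).isUnit).dvd_mul_left).1 hd
      have h2 := (reverse_dvd_iff hg0 hmapc0).2 h1
      rwa [reverse_map, reverse_reverse hh0] at h2
    · intro hd
      have h2 : g.reverse ∣ (h.reverse.map τ1).reverse := by
        rwa [reverse_map, reverse_reverse hh0]
      have h3 := (reverse_dvd_iff hg0 hmapc0).1 h2
      rw [hHm]
      exact h3.mul_left _
  -- Step D : iterate of the sharp operation
  have hSeq : (sharp p e k : F[X] → F[X]) = Sf p e k := funext (sharp_eq_Sf p e k hp.ne_zero)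
  have hl1 : t' + 1 + (t' + 1) - 1 = 2 * t' + 1 := by omega
  have hArith : (e - k) + (e - k) * (2 * t') = (e - k) * (2 * t' + 1) := by ring
  have hiter : (Sf p e k)^[2 * t' + 1] g =
      C ((iterateFrobenius F p ((e - k) * (2 * t' + 1)) (g.coeff 0))⁻¹) *
        (g.map (iterateFrobenius F p ((e - k) * (2 * t' + 1)))).reverse := by
    rw [Function.iterate_succ_apply', Sf_iter_even p e k hg hg0 t']
    rw [Sf]
    congr 2
    · rw [coeff_map, ← iterateFrobenius_add_apply, hArith]
    · rw [Polynomial.map_map, ← iterateFrobenius_add, hArith]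
  -- identities p ^ ((e-k) * l) = id
  obtain ⟨s₀, hs₀⟩ := hel
  have hid_l : ∀ x : F, x ^ p ^ ((e - k) * (2 * t' + 2)) = x := by
    intro x
    rw [show (e - k) * (2 * t' + 2) = (e - k) * (t' + 1 + (t' + 1)) by ring, hs₀]
    exact pow_emul p e hfe s₀ x
  have hid_sum : ∀ x : F, x ^ p ^ ((e - k) + (e - k) * (2 * t' + 1)) = x := by
    intro x
    rw [show (e - k) + (e - k) * (2 * t' + 1) = (e - k) * (2 * t' + 2) by ring]
    exact hid_l x
  have hRHS : (g * (Sf p e k)^[2 * t' + 1] g ∣ X ^ n - C lam) ↔ g.reverse ∣ h.map τ1 := by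
    rw [hgh, hiter, mul_dvd_mul_iff_left hg.ne_zero]
    have hcne : (iterateFrobenius F p ((e - k) * (2 * t' + 1)) (g.coeff 0)) ≠ 0 :=
      iter_ne_zero p _ hg0
    rw [(isUnit_C.2 (inv_ne_zero hcne).isUnit).mul_left_dvd]
    rw [← map_iter_dvd_iff p (a := e - k) (b := (e - k) * (2 * t' + 1)) hid_sum]
    have hls : (g.map (iterateFrobenius F p ((e - k) * (2 * t' + 1)))).reverse.map τ1
        = g.reverse := by
      rw [← reverse_map, Polynomial.map_map, hτ1, ← iterateFrobenius_add,
        show (e - k) + (e - k) * (2 * t' + 1) = (e - k) * (2 * t' + 2) by ring,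
        map_iter_id p hid_l]
    rw [hτ1] at hls ⊢
    rw [hls]
  -- put everything together
  show galoisDualSet (p ^ k) Cs ⊆ Cs ↔ g * (sharp p e k)^[t' + 1 + (t' + 1) - 1] g ∣ _
  rw [hdualeq, hSeq, hl1]
  exact hB.trans (hC1.trans hRHS.symm)
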